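/- Let M = (S, ρ) be a matroid scheme and a an atom of S. The following are equivalent: (1) for every x ∈ S with x ≱ a, the set x∨a is nonempty and ρ(u) = ρ(x)+1 for every u ∈ x∨a; (2) a ≤ b for every basis b ∈ B(M); (3) a ≤ m for every maximal element m of S, and a ≰ c for every circuit c ∈ C(M). -/

import Mathlib

/-- The set of minimal upper bounds of `x` and `y` (denoted `x ∨ y` in the paper). -/
def mub {S : Type*} [PartialOrder S] (x y : S) : Set S :=
  {u | x ≤ u ∧ y ≤ u ∧ ∀ v, x ≤ v → y ≤ v → v ≤ u → v = u}

/-- The set of maximal lower bounds of `x` and `y` (denoted `x ∧ y` in the paper). -/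
def mlb {S : Type*} [PartialOrder S] (x y : S) : Set S :=
  {l | l ≤ x ∧ l ≤ y ∧ ∀ m, m ≤ x → m ≤ y → l ≤ m → m = l}

/-- The set of minimal upper bounds of a subset `T`. -/
def mubSet {S : Type*} [PartialOrder S] (T : Set S) : Set S :=
  {u | (∀ t ∈ T, t ≤ u) ∧ ∀ v, (∀ t ∈ T, t ≤ v) → v ≤ u → v = u}

/-- The number of atoms below `x`, i.e. `|x|`, the rank of `x` in a simplicial poset. -/
noncomputable def natRank {S : Type*} [PartialOrder S] [OrderBot S] (x : S) : ℕ :=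
  Nat.card {a : S // IsAtom a ∧ a ≤ x}

/-- A finite bounded-below poset is simplicial if every lower interval is isomorphic to
the Boolean lattice of subsets of the set of atoms below. -/
def IsSimplicialPoset (S : Type*) [PartialOrder S] [OrderBot S] [Fintype S] : Prop :=
  ∀ x : S, Nonempty (Set.Iic x ≃o Set {a : S // IsAtom a ∧ a ≤ x})

/-- A matroid scheme: a rank function `ρ` on a finite simplicial poset `S`
satisfying (M1)–(M5). -/
structure IsMatroidScheme {S : Type*} [PartialOrder S] [OrderBot S] [Fintype S]
    (ρ : S → ℕ) : Prop where
  simplicial : IsSimplicialPoset S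
  M1 : ∀ x : S, ρ x ≤ natRank x
  M2 : ∀ ⦃x y : S⦄, x ≤ y → ρ x ≤ ρ y
  M3 : ∀ x y u l : S, u ∈ mub x y → l ∈ mlb x y → ρ u + ρ l ≤ ρ x + ρ y
  M4 : ∀ x y l : S, l ∈ mlb x y → ρ x = ρ l → (mub x y).Nonempty
  M5 : ∀ x y : S, ρ x < ρ y →
    ∃ a : S, IsAtom a ∧ a ≤ y ∧ ¬ a ≤ x ∧ (mub x a).Nonempty

/-- `cl` is the closure operator of a matroid scheme `(S, ρ)`:
`cl x` is the greatest element above `x` of the same rank. -/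
def IsClosureFun {S : Type*} [PartialOrder S] (ρ : S → ℕ) (cl : S → S) : Prop :=
  ∀ x : S, x ≤ cl x ∧ ρ (cl x) = ρ x ∧ ∀ y : S, x ≤ y → ρ y = ρ x → y ≤ cl x

/-- The bases of a matroid scheme: the maximal independent elements. -/
def Bases {S : Type*} [PartialOrder S] [OrderBot S] (ρ : S → ℕ) : Set S :=
  {x | ρ x = natRank x ∧ ∀ w, ρ w = natRank w → x ≤ w → w = x}

/-- The circuits of a matroid scheme: the minimal dependent elements. -/
def Circuits {S : Type*} [PartialOrder S] [OrderBot S] (ρ : S → ℕ) : Set S :=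
  {x | ρ x < natRank x ∧ ∀ y, ρ y < natRank y → y ≤ x → y = x}

/-- `c` is the complement `x ∖ a` of `a` in the Boolean lattice `S_{≤ x}`. -/
def IsComplementIn {S : Type*} [PartialOrder S] [OrderBot S] (c a x : S) : Prop :=
  c ≤ x ∧ a ≤ x ∧ (∀ l : S, l ≤ c → l ≤ a → l = ⊥) ∧
    (∀ u : S, u ≤ x → c ≤ u → a ≤ u → u = x)

/-- The rank of a matroid scheme: the common value of `ρ` on maximal elements
(equal to the maximum value of `ρ`). -/
noncomputable def schemeRank {S : Type*} [Fintype S] (ρ : S → ℕ) : ℕ :=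
  sSup (Set.range ρ)

/-- The Tutte polynomial of a matroid scheme, as a two-variable integer function. -/
noncomputable def tutte {S : Type*} [PartialOrder S] [OrderBot S] [Fintype S]
    (ρ : S → ℕ) (x y : ℤ) : ℤ :=
  ∑ w : S, (x - 1) ^ (schemeRank ρ - ρ w) * (y - 1) ^ (natRank w - ρ w)

/-- An element of a poset is an order-atom if it covers a global minimum. -/
def OrdAtom {P : Type*} [PartialOrder P] (a : P) : Prop :=
  ∃ b : P, (∀ z : P, b ≤ z) ∧ b ⋖ a

/-- A partial order is a geometric lattice: it is bounded below, every pair has a least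
upper bound and greatest lower bound, it is atomistic, and it is (upper) semimodular. -/
def IsGeomLatOrder (P : Type*) [PartialOrder P] : Prop :=
  (∃ b : P, ∀ x : P, b ≤ x) ∧
  (∀ x y : P, ∃ u : P, IsLUB {x, y} u) ∧
  (∀ x y : P, ∃ l : P, IsGLB {x, y} l) ∧
  (∀ x : P, IsLUB {a : P | OrdAtom a ∧ a ≤ x} x) ∧
  (∀ x y m j : P, IsGLB {x, y} m → IsLUB {x, y} j → m ⋖ x → y ⋖ j)

/-- A geometric poset: a finite bounded-below poset with rank function `rk`
satisfying (G1) and (G2). -/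
def IsGeometricPoset (P : Type*) [PartialOrder P] [OrderBot P] [Fintype P]
    (rk : P → ℕ) : Prop :=
  rk ⊥ = 0 ∧
  (∀ ⦃x y : P⦄, x ≤ y → rk x ≤ rk y) ∧
  (∀ x y : P, x ⋖ y → rk y = rk x + 1) ∧
  (∀ m : P, IsMax m → IsGeomLatOrder (Set.Iic m)) ∧
  (∀ (x : P) (A : Set P), (∀ a ∈ A, IsAtom a) →
    ∀ y ∈ mubSet A, rk x < rk y → rk y = Nat.card A →
      ∃ a ∈ A, ¬ a ≤ x ∧ ∃ w : P, x ≤ w ∧ a ≤ w)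

set_option linter.unusedSectionVars false

lemma finite_exists_maximal_wrt {α β : Type*} [PartialOrder β] (f : α → β) (s : Set α)
    (h : s.Finite) (hs : s.Nonempty) : ∃ a ∈ s, ∀ a' ∈ s, f a ≤ f a' → f a = f a' := by
  obtain ⟨i, hi, hmax⟩ := Set.Finite.exists_maximalFor f s h hs
  exact ⟨i, hi, fun a' ha' hle => le_antisymm hle (hmax ha' hle)⟩


section
variable {S : Type*} [PartialOrder S] [OrderBot S] [Fintype S]

def atomsBelow (x : S) : Set S := {b | IsAtom b ∧ b ≤ x}

lemma mem_atomsBelow {b x : S} : b ∈ atomsBelow x ↔ IsAtom b ∧ b ≤ x := Iff.rfl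

lemma natRank_eq (x : S) : natRank x = (atomsBelow x).ncard := rfl

lemma atomsBelow_mono {y z : S} (h : y ≤ z) : atomsBelow y ⊆ atomsBelow z :=
  fun _ hb => ⟨hb.1, hb.2.trans h⟩

lemma simp_key (hS : IsSimplicialPoset S) (x : S) :
    (∀ y z : S, y ≤ x → z ≤ x → atomsBelow y ⊆ atomsBelow z → y ≤ z) ∧
    (∀ T : Set S, T ⊆ atomsBelow x → ∃ j, j ≤ x ∧ atomsBelow j = T) := by
  obtain ⟨f⟩ := hS x
  set A := {a : S // IsAtom a ∧ a ≤ x} with hA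
  -- bottom maps to empty set
  have hbot : f ⟨⊥, bot_le⟩ = (∅ : Set A) := by
    have h1 : (⟨⊥, bot_le⟩ : Set.Iic x) ≤ f.symm ∅ := bot_le
    have := f.le_iff_le.2 h1
    simpa using this
  set g : A → Set.Iic x := fun e => f.symm {e} with hg
  have hgle : ∀ (e : A) (y : S) (hy : y ≤ x), (g e).1 ≤ y ↔ e ∈ f ⟨y, hy⟩ := by
    intro e y hy
    constructor
    · intro h
      have : g e ≤ ⟨y, hy⟩ := h
      have h2 : f (g e) ≤ f ⟨y, hy⟩ := f.le_iff_le.2 this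
      have h3 : ({e} : Set A) ⊆ f ⟨y, hy⟩ := by
        simp only [hg, OrderIso.apply_symm_apply] at h2; exact h2
      exact h3 rfl
    · intro h
      have : ({e} : Set A) ⊆ f ⟨y, hy⟩ := Set.singleton_subset_iff.2 h
      have : g e ≤ ⟨y, hy⟩ := by
        rw [hg]
        have := f.symm.le_iff_le.2 (show ({e} : Set A) ≤ f ⟨y, hy⟩ from this)
        simpa using this
      exact this
  have hgatom : ∀ e : A, IsAtom (g e).1 := by
    intro e
    constructor
    · intro hbot'
      have : g e = ⟨⊥, bot_le⟩ := Subtype.ext hbot'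
      have h2 : ({e} : Set A) = ∅ := by
        have := congrArg f this
        simpa [hg, hbot] using this
      simp at h2
    · intro c hc
      have hcx : c ≤ x := hc.le.trans (g e).2
      have hlt : (⟨c, hcx⟩ : Set.Iic x) < g e := by
        exact hc
      have : f ⟨c, hcx⟩ < ({e} : Set A) := by
        have := f.lt_iff_lt.2 hlt
        simpa [hg] using this
      have hsub : f ⟨c, hcx⟩ ⊆ {e} := this.le
      rcases Set.subset_singleton_iff_eq.1 hsub with h0 | h0
      · have : (⟨c, hcx⟩ : Set.Iic x) = ⟨⊥, bot_le⟩ := f.injective (by rw [h0, hbot])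
        simpa using congrArg Subtype.val this
      · exact absurd h0 this.ne
  set gh : A → A := fun e => ⟨(g e).1, hgatom e, (g e).2⟩ with hgh
  have hinj : Function.Injective gh := by
    intro e e' hee
    have h4 : (gh e).1 = (gh e').1 := congrArg Subtype.val hee
    have : g e = g e' := Subtype.ext h4
    have := f.symm.injective this
    simpa using this
  have hsurj : Function.Surjective gh := Finite.injective_iff_surjective.1 hinj
  constructor
  · intro y z hy hz hsub
    have : f ⟨y, hy⟩ ⊆ f ⟨z, hz⟩ := by
      intro e he
      have h1 : (g e).1 ≤ y := (hgle e y hy).2 he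
      have h2 : (g e).1 ∈ atomsBelow z := hsub ⟨hgatom e, h1⟩
      exact (hgle e z hz).1 h2.2
    have := f.le_iff_le.1 (show f ⟨y, hy⟩ ≤ f ⟨z, hz⟩ from this)
    exact this
  · intro T hT
    set E : Set A := {e | (g e).1 ∈ T} with hE
    refine ⟨(f.symm E).1, (f.symm E).2, ?_⟩
    have hfj : f ⟨(f.symm E).1, (f.symm E).2⟩ = E := by
      have : (⟨(f.symm E).1, (f.symm E).2⟩ : Set.Iic x) = f.symm E := rfl
      rw [this, f.apply_symm_apply]
    ext b
    constructor
    · rintro ⟨hb, hbj⟩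
      obtain ⟨e, he⟩ := hsurj ⟨b, hb, hbj.trans (f.symm E).2⟩
      have hgeb : (g e).1 = b := congrArg Subtype.val he
      have : e ∈ f ⟨(f.symm E).1, (f.symm E).2⟩ := (hgle e _ (f.symm E).2).1 (hgeb ▸ hbj)
      rw [hfj] at this
      exact hgeb ▸ this
    · intro hbT
      obtain ⟨hb, hbx⟩ := hT hbT
      obtain ⟨e, he⟩ := hsurj ⟨b, hb, hbx⟩
      have hgeb : (g e).1 = b := congrArg Subtype.val he
      have heE : e ∈ E := by rw [hE]; simp only [Set.mem_setOf_eq, hgeb]; exact hbT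
      have : e ∈ f ⟨(f.symm E).1, (f.symm E).2⟩ := by rw [hfj]; exact heE
      exact ⟨hb, hgeb ▸ (hgle e _ (f.symm E).2).2 this⟩
end

section
variable {S : Type*} [PartialOrder S] [OrderBot S] [Fintype S]

lemma atomsBelow_finite (x : S) : (atomsBelow x).Finite := Set.toFinite _

lemma le_of_ab_subset (hS : IsSimplicialPoset S) {x y z : S} (hy : y ≤ x) (hz : z ≤ x)
    (h : atomsBelow y ⊆ atomsBelow z) : y ≤ z := (simp_key hS x).1 y z hy hz h

lemma exists_realize (hS : IsSimplicialPoset S) {x : S} {T : Set S} (hT : T ⊆ atomsBelow x) :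
    ∃ j, j ≤ x ∧ atomsBelow j = T := (simp_key hS x).2 T hT

lemma eq_of_le_of_ab_subset (hS : IsSimplicialPoset S) {y z : S} (h : y ≤ z)
    (h2 : atomsBelow z ⊆ atomsBelow y) : y = z :=
  le_antisymm h (le_of_ab_subset hS le_rfl h h2)

lemma atomsBelow_bot : atomsBelow (⊥ : S) = ∅ := by
  ext b; simp only [mem_atomsBelow, Set.mem_empty_iff_false, iff_false, not_and, le_bot_iff]
  intro hb hb2; exact hb.1 hb2

lemma natRank_bot : natRank (⊥ : S) = 0 := by rw [natRank_eq, atomsBelow_bot]; simp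

lemma atomsBelow_atom {a : S} (ha : IsAtom a) : atomsBelow a = {a} := by
  ext b
  simp only [mem_atomsBelow, Set.mem_singleton_iff]
  constructor
  · rintro ⟨hb, hba⟩
    rcases (ha.le_iff.1 hba) with h | h
    · exact absurd h hb.1
    · exact h
  · rintro rfl; exact ⟨ha, le_rfl⟩

lemma natRank_atom {a : S} (ha : IsAtom a) : natRank a = 1 := by
  rw [natRank_eq, atomsBelow_atom ha]; simp

lemma natRank_mono {y z : S} (h : y ≤ z) : natRank y ≤ natRank z := by
  rw [natRank_eq, natRank_eq]
  exact Set.ncard_le_ncard (atomsBelow_mono h) (atomsBelow_finite z)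

lemma eq_of_le_of_natRank_le (hS : IsSimplicialPoset S) {y z : S} (h : y ≤ z)
    (h2 : natRank z ≤ natRank y) : y = z := by
  have := Set.eq_of_subset_of_ncard_le (atomsBelow_mono h) h2 (atomsBelow_finite z)
  exact eq_of_le_of_ab_subset hS h this.symm.subset

/-- minimal upper bounds have atom set the union. -/
lemma ab_of_mem_mub (hS : IsSimplicialPoset S) {y z u : S} (hu : u ∈ mub y z) :
    atomsBelow u = atomsBelow y ∪ atomsBelow z := by
  obtain ⟨hyu, hzu, hmin⟩ := hu
  obtain ⟨j, hjx, hjab⟩ := exists_realize hS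
    (Set.union_subset (atomsBelow_mono hyu) (atomsBelow_mono hzu))
  have hyj : y ≤ j := le_of_ab_subset hS hyu hjx (hjab ▸ Set.subset_union_left)
  have hzj : z ≤ j := le_of_ab_subset hS hzu hjx (hjab ▸ Set.subset_union_right)
  rw [hmin j hyj hzj hjx] at hjab
  exact hjab

lemma eq_bot_of_ab_empty (hS : IsSimplicialPoset S) {m : S} (h : atomsBelow m = ∅) : m = ⊥ := by
  have := le_of_ab_subset hS (le_refl m) bot_le (by rw [h]; exact Set.empty_subset _)
  exact le_bot_iff.1 this
end

section
variable {S : Type*} [PartialOrder S] [OrderBot S] [Fintype S] {ρ : S → ℕ}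

lemma rho_bot (h : IsMatroidScheme ρ) : ρ (⊥ : S) = 0 :=
  Nat.le_zero.1 (natRank_bot (S := S) ▸ h.M1 ⊥)

lemma bot_mem_mlb (h2 : IsSimplicialPoset S) {y z : S}
    (hd : atomsBelow y ∩ atomsBelow z = ∅) : (⊥ : S) ∈ mlb y z := by
  refine ⟨bot_le, bot_le, fun m hmy hmz _ => ?_⟩
  apply eq_bot_of_ab_empty h2
  have : atomsBelow m ⊆ atomsBelow y ∩ atomsBelow z :=
    Set.subset_inter (atomsBelow_mono hmy) (atomsBelow_mono hmz)
  rw [hd] at this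
  exact Set.subset_empty_iff.1 this

/-- P1: every element below an independent element is independent. -/
lemma indep_of_le (h : IsMatroidScheme ρ) {z v : S} (hz : ρ z = natRank z) (hvz : v ≤ z) :
    ρ v = natRank v := by
  refine le_antisymm (h.M1 v) ?_
  obtain ⟨c, hcz, hcab⟩ := exists_realize h.simplicial
    (T := atomsBelow z \ atomsBelow v) Set.diff_subset
  have habsub : atomsBelow v ⊆ atomsBelow z := atomsBelow_mono hvz
  have hzmub : z ∈ mub v c := by
    refine ⟨hvz, hcz, fun m hvm hcm hmz => ?_⟩
    refine (eq_of_le_of_ab_subset h.simplicial hmz ?_).symm ▸ rfl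
    intro b hb
    by_cases hbv : b ∈ atomsBelow v
    · exact atomsBelow_mono hvm hbv
    · exact atomsBelow_mono hcm (hcab ▸ ⟨hb, hbv⟩)
  have hbotmlb : (⊥ : S) ∈ mlb v c := by
    apply bot_mem_mlb h.simplicial
    rw [hcab]
    ext b; simp only [Set.mem_inter_iff, Set.mem_diff, Set.mem_empty_iff_false, iff_false]
    rintro ⟨h1, _, h3⟩; exact h3 h1
  have hM3 := h.M3 v c z ⊥ hzmub hbotmlb
  rw [rho_bot h] at hM3
  have hcard : natRank c = natRank z - natRank v := by
    rw [natRank_eq, hcab, Set.ncard_diff habsub (atomsBelow_finite v), ← natRank_eq, ← natRank_eq]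
  have h1 : ρ z ≤ ρ v + ρ c := by omega
  have h2 : ρ c ≤ natRank z - natRank v := hcard ▸ h.M1 c
  have h3 : natRank v ≤ natRank z := natRank_mono hvz
  omega

/-- P2: extend an independent element below x to one of full rank ρ x. -/
lemma exists_indep_rank (h : IsMatroidScheme ρ) {y x : S} (hyx : y ≤ x)
    (hy : ρ y = natRank y) :
    ∃ z, y ≤ z ∧ z ≤ x ∧ ρ z = natRank z ∧ ρ z = ρ x := by
  classical
  set F : Set S := {v | y ≤ v ∧ v ≤ x ∧ ρ v = natRank v} with hF
  obtain ⟨z, hzF, hzmax⟩ := finite_exists_maximal_wrt id F (Set.toFinite F)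
    ⟨y, le_rfl, hyx, hy⟩
  obtain ⟨hyz, hzx, hzind⟩ := hzF
  refine ⟨z, hyz, hzx, hzind, ?_⟩
  -- key claim by induction on the number of missing atoms
  suffices H : ∀ n : ℕ, ∀ w : S, z ≤ w → w ≤ x → ρ w = ρ z →
      (atomsBelow x \ atomsBelow w).ncard = n → ρ x = ρ w by
    exact (H _ z le_rfl hzx rfl rfl).symm
  intro n
  induction n using Nat.strong_induction_on with
  | _ n ih =>
    intro w hzw hwx hρw hn
    rcases Nat.eq_zero_or_pos n with h0 | hpos
    · have : atomsBelow x \ atomsBelow w = ∅ := by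
        rw [← Set.ncard_eq_zero (Set.toFinite _)] at *; omega
      have hsub : atomsBelow x ⊆ atomsBelow w := by
        intro b hb; by_contra hbw; exact absurd ⟨hb, hbw⟩ (this ▸ Set.notMem_empty b)
      have : w = x := eq_of_le_of_ab_subset h.simplicial hwx hsub
      rw [this]
    · -- pick a missing atom b
      have hne : (atomsBelow x \ atomsBelow w).Nonempty := by
        rw [Set.nonempty_iff_ne_empty]
        intro hemp; rw [hemp] at hn; simp at hn; omega
      obtain ⟨b, hbx, hbw⟩ := hne
      have hbz : b ∉ atomsBelow z := fun hb => hbw (atomsBelow_mono hzw hb)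
      -- z' = z ⊔ b
      obtain ⟨z', hz'x, hz'ab⟩ := exists_realize h.simplicial
        (T := insert b (atomsBelow z)) (by
          rw [Set.insert_subset_iff]; exact ⟨hbx, (atomsBelow_mono hzx)⟩)
      have hzz' : z ≤ z' := le_of_ab_subset h.simplicial hzx hz'x
        (hz'ab ▸ Set.subset_insert _ _)
      have hbz' : b ≤ z' := (show b ∈ atomsBelow z' from hz'ab ▸ Set.mem_insert _ _).2
      have hnrz' : natRank z' = natRank z + 1 := by
        rw [natRank_eq, natRank_eq, hz'ab, Set.ncard_insert_of_notMem hbz (atomsBelow_finite z)]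
      have hρz' : ρ z' = ρ z := by
        refine le_antisymm ?_ (h.M2 hzz')
        by_contra hlt
        push_neg at hlt
        have hind : ρ z' = natRank z' := by
          have := h.M1 z'; omega
        have := hzmax z' ⟨hyz.trans hzz', hz'x, hind⟩ hzz'
        simp only [id] at this
        rw [← this] at hbz'
        exact hbz ⟨hbx.1, hbz'⟩
      -- w' = w ⊔ b
      obtain ⟨w', hw'x, hw'ab⟩ := exists_realize h.simplicial
        (T := insert b (atomsBelow w)) (by
          rw [Set.insert_subset_iff]; exact ⟨hbx, (atomsBelow_mono hwx)⟩)
      have hww' : w ≤ w' := le_of_ab_subset h.simplicial hwx hw'x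
        (hw'ab ▸ Set.subset_insert _ _)
      have hbw' : b ≤ w' := (show b ∈ atomsBelow w' from hw'ab ▸ Set.mem_insert _ _).2
      have hz'w' : z' ≤ w' := le_of_ab_subset h.simplicial hz'x hw'x (by
        rw [hz'ab, hw'ab]
        exact Set.insert_subset_insert (atomsBelow_mono hzw))
      -- w' ∈ mub w z'
      have hmub : w' ∈ mub w z' := by
        refine ⟨hww', hz'w', fun v hwv hz'v hvw' => ?_⟩
        refine (eq_of_le_of_ab_subset h.simplicial hvw' ?_).symm ▸ rfl
        rw [hw'ab]
        rw [Set.insert_subset_iff]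
        exact ⟨⟨hbx.1, hbz'.trans hz'v⟩, atomsBelow_mono hwv⟩
      -- z ∈ mlb w z'
      have hmlb : z ∈ mlb w z' := by
        refine ⟨hzw, hzz', fun m hmw hmz' hzm => ?_⟩
        refine eq_of_le_of_ab_subset h.simplicial hzm ?_ ▸ rfl
        intro c hc
        have hc1 : c ∈ insert b (atomsBelow z) := hz'ab ▸ atomsBelow_mono hmz' hc
        rcases hc1 with rfl | hc2
        · exact absurd (atomsBelow_mono hmw hc) hbw
        · exact hc2
      have hM3 := h.M3 w z' w' z hmub hmlb
      have hρw' : ρ w' = ρ w := le_antisymm (by omega) (h.M2 hww')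
      -- measure decreases
      have hmeas : (atomsBelow x \ atomsBelow w').ncard = n - 1 := by
        have : atomsBelow x \ atomsBelow w' = (atomsBelow x \ atomsBelow w) \ {b} := by
          rw [hw'ab]
          ext c
          simp only [Set.mem_diff, Set.mem_insert_iff, Set.mem_singleton_iff]
          tauto
        rw [this, ← hn, Set.ncard_diff_singleton_of_mem (Set.mem_diff b |>.2 ⟨hbx, hbw⟩)]
      exact (ih (n-1) (by omega) w' (hzw.trans hww') hw'x (by omega) hmeas).trans hρw'
end

section
variable {S : Type*} [PartialOrder S] [OrderBot S] [Fintype S] {ρ : S → ℕ}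

/-- P3: extend an independent element to a basis. -/
lemma exists_basis_ge (h : IsMatroidScheme ρ) {y : S} (hy : ρ y = natRank y) :
    ∃ b ∈ Bases ρ, y ≤ b := by
  obtain ⟨b, hbF, hbmax⟩ := finite_exists_maximal_wrt id {v : S | y ≤ v ∧ ρ v = natRank v}
    (Set.toFinite _) ⟨y, le_rfl, hy⟩
  exact ⟨b, ⟨hbF.2, fun w hw hbw => (hbmax w ⟨hbF.1.trans hbw, hw⟩ hbw).symm⟩, hbF.1⟩

/-- P4: any dependent element has a circuit below it. -/
lemma exists_circuit_le (h : IsMatroidScheme ρ) {x : S} (hx : ρ x < natRank x) :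
    ∃ c ∈ Circuits ρ, c ≤ x := by
  obtain ⟨c, hcF, hcmin⟩ := finite_exists_maximal_wrt (OrderDual.toDual : S → Sᵒᵈ)
    {v : S | v ≤ x ∧ ρ v < natRank v} (Set.toFinite _) ⟨x, le_rfl, hx⟩
  refine ⟨c, ⟨hcF.2, fun v hv hvc => ?_⟩, hcF.1⟩
  exact (OrderDual.toDual.injective (hcmin v ⟨hvc.trans hcF.1, hv⟩ hvc)).symm

/-- P5: every element lies below a maximal element. -/
lemma exists_isMax_ge (x : S) : ∃ m : S, IsMax m ∧ x ≤ m := by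
  obtain ⟨m, hmF, hmmax⟩ := finite_exists_maximal_wrt id {v : S | x ≤ v}
    (Set.toFinite _) ⟨x, le_rfl⟩
  exact ⟨m, fun b hmb => (hmmax b (hmF.trans hmb) hmb).symm.le, hmF⟩

/-- The atom set of an element of `mub x a` where `a` is an atom not below `x`. -/
lemma ab_mub_atom (hS : IsSimplicialPoset S) {x a u : S} (ha : IsAtom a)
    (hu : u ∈ mub x a) : atomsBelow u = insert a (atomsBelow x) := by
  rw [ab_of_mem_mub hS hu, atomsBelow_atom ha, Set.union_singleton]

lemma natRank_mub_atom (hS : IsSimplicialPoset S) {x a u : S} (ha : IsAtom a) (hax : ¬ a ≤ x)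
    (hu : u ∈ mub x a) : natRank u = natRank x + 1 := by
  rw [natRank_eq, natRank_eq, ab_mub_atom hS ha hu,
    Set.ncard_insert_of_notMem (fun hc => hax hc.2) (atomsBelow_finite x)]

/-- P7 upper bound: ρ u ≤ ρ x + 1 for u ∈ mub x a. -/
lemma rho_mub_atom_le (h : IsMatroidScheme ρ) {x a u : S} (ha : IsAtom a) (hax : ¬ a ≤ x)
    (hu : u ∈ mub x a) : ρ u ≤ ρ x + 1 := by
  have hmlb : (⊥ : S) ∈ mlb x a := by
    refine ⟨bot_le, bot_le, fun m hmx hma _ => ?_⟩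
    rcases ha.le_iff.1 hma with h0 | h0
    · exact h0
    · exact absurd (h0 ▸ hmx) hax
  have := h.M3 x a u ⊥ hu hmlb
  have h1 : ρ a ≤ 1 := (natRank_atom ha) ▸ h.M1 a
  have := rho_bot h
  omega

/-- (1) → (2) -/
lemma imp12 (h : IsMatroidScheme ρ) {a : S} (ha : IsAtom a)
    (h1 : ∀ x : S, ¬ a ≤ x → (mub x a).Nonempty ∧ ∀ u ∈ mub x a, ρ u = ρ x + 1) :
    ∀ b ∈ Bases ρ, a ≤ b := by
  intro b hb
  by_contra hab
  obtain ⟨⟨u, hu⟩, hval⟩ := h1 b hab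
  have hnr : natRank u = natRank b + 1 := natRank_mub_atom h.simplicial ha hab hu
  have huind : ρ u = natRank u := by rw [hnr, ← hb.1, hval u hu]
  have := hb.2 u huind hu.1
  exact hab (this ▸ hu.2.1)

/-- (2) → (3) -/
lemma imp23 (h : IsMatroidScheme ρ) {a : S} (ha : IsAtom a)
    (h2 : ∀ b ∈ Bases ρ, a ≤ b) :
    (∀ m : S, IsMax m → a ≤ m) ∧ ∀ c ∈ Circuits ρ, ¬ a ≤ c := by
  constructor
  · intro m hm
    have hbot : ρ (⊥ : S) = natRank (⊥ : S) := by rw [rho_bot h, natRank_bot]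
    obtain ⟨z, _, hzm, hzind, hzρ⟩ := exists_indep_rank h (bot_le : (⊥:S) ≤ m) hbot
    have hzbasis : z ∈ Bases ρ := by
      refine ⟨hzind, fun w hw hzw => ?_⟩
      by_contra hne
      have hlt : ρ z < ρ w := by
        have h1 := natRank_mono hzw
        have h2 : natRank z ≠ natRank w := by
          intro he
          exact hne (eq_of_le_of_natRank_le h.simplicial hzw he.ge).symm
        rw [hzind, hw]; omega
      rw [hzρ] at hlt
      obtain ⟨a', _, _, ha'm, ⟨u, hu⟩⟩ := h.M5 m w hlt
      have := hm hu.1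
      exact ha'm (this.trans' hu.2.1 |>.trans (le_refl m) |> fun _ => (hu.2.1.trans this))
    exact (h2 z hzbasis).trans hzm
  · intro c hc hac
    -- d = c minus a
    obtain ⟨d, hdc, hdab⟩ := exists_realize h.simplicial
      (T := atomsBelow c \ {a}) Set.diff_subset
    have hamem : a ∈ atomsBelow c := ⟨ha, hac⟩
    have hdne : d ≠ c := by
      intro he
      have : a ∈ atomsBelow d := he ▸ hamem
      rw [hdab] at this; exact this.2 rfl
    have hdind : ρ d = natRank d := by
      by_contra hne
      have : ρ d < natRank d := lt_of_le_of_ne (h.M1 d) hne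
      exact hdne (hc.2 d this hdc)
    have hnrd : natRank d + 1 = natRank c := by
      rw [natRank_eq, natRank_eq, hdab,
        Set.ncard_diff_singleton_of_mem hamem]
      have : 0 < (atomsBelow c).ncard := by
        rw [Set.ncard_pos (atomsBelow_finite c)]; exact ⟨a, hamem⟩
      omega
    have hρc : ρ c = ρ d := by
      have h1 : ρ c < natRank c := hc.1
      have h2 := h.M2 hdc
      omega
    obtain ⟨b, hbB, hdb⟩ := exists_basis_ge h hdind
    have hab : a ≤ b := h2 b hbB
    -- w = d ⊔ a inside b
    obtain ⟨w, hwb, hwab⟩ := exists_realize h.simplicial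
      (T := insert a (atomsBelow d)) (by
        rw [Set.insert_subset_iff]
        exact ⟨⟨ha, hab⟩, (atomsBelow_mono hdb)⟩)
    have hdw : d ≤ w := le_of_ab_subset h.simplicial hdb hwb (hwab ▸ Set.subset_insert _ _)
    have haw : a ≤ w := (show a ∈ atomsBelow w from hwab ▸ Set.mem_insert _ _).2
    have hand : a ∉ atomsBelow d := by rw [hdab]; exact fun hcon => hcon.2 rfl
    have hnw : natRank w = natRank d + 1 := by
      rw [natRank_eq, natRank_eq, hwab, Set.ncard_insert_of_notMem hand (atomsBelow_finite d)]
    -- d ∈ mlb c w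
    have hmlb : d ∈ mlb c w := by
      refine ⟨hdc, hdw, fun m hmc hmw hdm => ?_⟩
      by_cases ham : a ≤ m
      · -- then m is independent with natRank c atoms, m ≤ c forces m = c, c indep: contra
        exfalso
        have hmind : ρ m = natRank m := indep_of_le h (indep_of_le h hbB.1 hwb) hmw
        have habm : insert a (atomsBelow d) ⊆ atomsBelow m := by
          rw [Set.insert_subset_iff]
          exact ⟨⟨ha, ham⟩, atomsBelow_mono hdm⟩
        have h5 : atomsBelow m = insert a (atomsBelow d) :=
          (Set.Subset.antisymm (hwab ▸ atomsBelow_mono hmw) habm)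
        have hmc' : m = c := by
          apply eq_of_le_of_natRank_le h.simplicial hmc
          rw [natRank_eq m, h5, ← hwab, ← natRank_eq, ← hnrd]
          exact hnw.ge
        rw [hmc'] at hmind
        omega
      · refine eq_of_le_of_ab_subset h.simplicial hdm ?_ ▸ rfl
        intro e he
        rw [hdab]
        refine ⟨atomsBelow_mono hmc he, ?_⟩
        intro h0
        exact ham (h0 ▸ he.2)
    obtain ⟨u, hu⟩ := h.M4 c w d hmlb hρc
    -- atoms of u = atoms of c, so u = c, so w ≤ c
    have habu : atomsBelow u = atomsBelow c := by
      rw [ab_of_mem_mub h.simplicial hu]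
      apply Set.union_eq_self_of_subset_right
      rw [hwab, Set.insert_subset_iff]
      exact ⟨hamem, hdab ▸ Set.diff_subset⟩
    have huc : c = u := eq_of_le_of_ab_subset h.simplicial hu.1 habu.subset
    have hwc : w ≤ c := huc ▸ hu.2.1
    have hwind : ρ w = natRank w := indep_of_le h hbB.1 hwb
    have := h.M2 hwc
    rw [hwind, hnw] at this
    rw [hρc] at *
    have h6 : ρ d = natRank d := hdind
    omega
end

section
variable {S : Type*} [PartialOrder S] [OrderBot S] [Fintype S] {ρ : S → ℕ}

/-- (3) → (2) -/
lemma imp32 (h : IsMatroidScheme ρ) {a : S} (ha : IsAtom a)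
    (h3 : (∀ m : S, IsMax m → a ≤ m) ∧ ∀ c ∈ Circuits ρ, ¬ a ≤ c) :
    ∀ b ∈ Bases ρ, a ≤ b := by
  intro b hb
  by_contra hab
  obtain ⟨m, hm, hbm⟩ := exists_isMax_ge b
  have ham : a ≤ m := h3.1 m hm
  obtain ⟨w, hwm, hwab⟩ := exists_realize h.simplicial
    (T := insert a (atomsBelow b)) (by
      rw [Set.insert_subset_iff]; exact ⟨⟨ha, ham⟩, atomsBelow_mono hbm⟩)
  have hbw : b ≤ w := le_of_ab_subset h.simplicial hbm hwm (hwab ▸ Set.subset_insert _ _)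
  have haw : a ≤ w := (show a ∈ atomsBelow w from hwab ▸ Set.mem_insert _ _).2
  have hanb : a ∉ atomsBelow b := fun hc => hab hc.2
  have hnw : natRank w = natRank b + 1 := by
    rw [natRank_eq, natRank_eq, hwab, Set.ncard_insert_of_notMem hanb (atomsBelow_finite b)]
  have hwdep : ρ w < natRank w := by
    rcases lt_or_eq_of_le (h.M1 w) with hlt | heq
    · exact hlt
    · exact absurd ((hb.2 w heq hbw) ▸ haw) hab
  obtain ⟨c, hcC, hcw⟩ := exists_circuit_le h hwdep
  refine h3.2 c hcC ?_
  by_contra hac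
  have : atomsBelow c ⊆ atomsBelow b := by
    intro e he
    rcases (hwab ▸ atomsBelow_mono hcw he : e ∈ insert a (atomsBelow b)) with rfl | h0
    · exact absurd he.2 hac
    · exact h0
  have hcb : c ≤ b := le_of_ab_subset h.simplicial hcw hbw this
  have hind := indep_of_le h hb.1 hcb
  have := hcC.1
  omega
end

section
variable {S : Type*} [PartialOrder S] [OrderBot S] [Fintype S] {ρ : S → ℕ}

/-- (3) → (1) -/
lemma imp31 (h : IsMatroidScheme ρ) {a : S} (ha : IsAtom a)
    (h3 : (∀ m : S, IsMax m → a ≤ m) ∧ ∀ c ∈ Circuits ρ, ¬ a ≤ c) :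
    ∀ x : S, ¬ a ≤ x → (mub x a).Nonempty ∧ ∀ u ∈ mub x a, ρ u = ρ x + 1 := by
  intro x hax
  constructor
  · -- nonemptiness
    obtain ⟨m, hm, hxm⟩ := exists_isMax_ge x
    have ham : a ≤ m := h3.1 m hm
    obtain ⟨u, hum, huab⟩ := exists_realize h.simplicial
      (T := insert a (atomsBelow x)) (by
        rw [Set.insert_subset_iff]; exact ⟨⟨ha, ham⟩, atomsBelow_mono hxm⟩)
    have hxu : x ≤ u := le_of_ab_subset h.simplicial hxm hum (huab ▸ Set.subset_insert _ _)
    have hau : a ≤ u := (show a ∈ atomsBelow u from huab ▸ Set.mem_insert _ _).2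
    refine ⟨u, hxu, hau, fun v hxv hav hvu => ?_⟩
    refine (eq_of_le_of_ab_subset h.simplicial hvu ?_).symm ▸ rfl
    rw [huab, Set.insert_subset_iff]
    exact ⟨⟨ha, hav⟩, atomsBelow_mono hxv⟩
  · intro u hu
    have hub := rho_mub_atom_le h ha hax hu
    have hlb : ρ x + 1 ≤ ρ u := by
      by_contra hc
      push_neg at hc
      have hρu : ρ u = ρ x := le_antisymm (by omega) (h.M2 hu.1)
      -- get independent z ≤ x with ρ z = ρ x
      have hbot : ρ (⊥ : S) = natRank (⊥ : S) := by rw [rho_bot h, natRank_bot]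
      obtain ⟨z, _, hzx, hzind, hzρ⟩ := exists_indep_rank h (bot_le : (⊥:S) ≤ x) hbot
      have hanz : a ∉ atomsBelow z := fun hc' => hax (hc'.2.trans hzx)
      -- y' = z ⊔ a inside u
      obtain ⟨y', hy'u, hy'ab⟩ := exists_realize h.simplicial
        (T := insert a (atomsBelow z)) (by
          rw [Set.insert_subset_iff]
          exact ⟨⟨ha, hu.2.1⟩, atomsBelow_mono (hzx.trans hu.1)⟩)
      have hzy' : z ≤ y' := le_of_ab_subset h.simplicial (hzx.trans hu.1) hy'u
        (hy'ab ▸ Set.subset_insert _ _)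
      have hay' : a ≤ y' := (show a ∈ atomsBelow y' from hy'ab ▸ Set.mem_insert _ _).2
      have hnry' : natRank y' = natRank z + 1 := by
        rw [natRank_eq, natRank_eq, hy'ab,
          Set.ncard_insert_of_notMem hanz (atomsBelow_finite z)]
      have hρy' : ρ y' = ρ z := by
        have h1 := h.M2 hy'u
        have h2 := h.M2 hzy'
        omega
      have hy'dep : ρ y' < natRank y' := by omega
      obtain ⟨c, hcC, hcy'⟩ := exists_circuit_le h hy'dep
      refine h3.2 c hcC ?_
      by_contra hac
      have : atomsBelow c ⊆ atomsBelow z := by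
        intro e he
        rcases (hy'ab ▸ atomsBelow_mono hcy' he : e ∈ insert a (atomsBelow z)) with rfl | h0
        · exact absurd he.2 hac
        · exact h0
      have hcz : c ≤ z := le_of_ab_subset h.simplicial hcy' hzy' this
      have := indep_of_le h hzind hcz
      have := hcC.1
      omega
    omega


end

/-- Proposition 7.2: characterizations of an isthmus. -/
theorem statement12 {S : Type*} [PartialOrder S] [OrderBot S] [Fintype S]
    (ρ : S → ℕ) (h : IsMatroidScheme ρ) (a : S) (ha : IsAtom a) :
    ((∀ x : S, ¬ a ≤ x → (mub x a).Nonempty ∧ ∀ u ∈ mub x a, ρ u = ρ x + 1) ↔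
      (∀ b ∈ Bases ρ, a ≤ b)) ∧
    ((∀ b ∈ Bases ρ, a ≤ b) ↔
      ((∀ m : S, IsMax m → a ≤ m) ∧ ∀ c ∈ Circuits ρ, ¬ a ≤ c)) := by
  constructor
  · exact ⟨imp12 h ha, fun h2 => imp31 h ha (imp23 h ha h2)⟩
  · exact ⟨imp23 h ha, imp32 h ha⟩
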